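/- Let V be a finite-dimensional complex vector space with dim V = r, let N_V be a Hermitian norm on V (induced by a Hermitian inner product), and let F be a filtration of V with jumping numbers e_F(1) ≥ ⋯ ≥ e_F(r). Then for every t ≥ 0 and every i = 1,…,r, λ_i(N^t_{V,F}, N_V) = t·e_F(i), where N^t_{V,F} is the ray of norms associated with N_V and F. -/

import Mathlib

open scoped BigOperators

/-- A Hermitian norm: a norm induced by a positive definite Hermitian inner product. -/
def IsHermitianNorm {V : Type*} [AddCommGroup V] [Module ℂ V] (N : V → ℝ) : Prop :=
  ∃ p : V → V → ℂ,
    (∀ u v w, p (u + v) w = p u w + p v w) ∧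
    (∀ (c : ℂ) (u v : V), p (c • u) v = c * p u v) ∧
    (∀ u v, p v u = (starRingEnd ℂ) (p u v)) ∧
    (∀ v, v ≠ 0 → 0 < (p v v).re) ∧
    (∀ v, N v = Real.sqrt (p v v).re)

/-- A (decreasing, left-continuous, exhaustive, bounded) filtration of a complex
vector space by subspaces. -/
def IsSubspaceFiltration {V : Type*} [AddCommGroup V] [Module ℂ V]
    (F : ℝ → Submodule ℂ V) : Prop :=
  (∀ ⦃s t : ℝ⦄, s < t → F t ≤ F s) ∧
  (∀ t : ℝ, ∃ ε₀ > (0:ℝ), ∀ ε : ℝ, 0 < ε → ε < ε₀ → F (t - ε) = F t) ∧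
  (∃ t₀ : ℝ, ∀ t ≤ t₀, F t = ⊤) ∧
  (∃ t₁ : ℝ, ∀ t : ℝ, t₁ ≤ t → F t = ⊥)

/-- The `j`-th jumping number of a filtration: `e_F(j) = sup{t : dim F^t V ≥ j}`. -/
noncomputable def jumpNum {V : Type*} [AddCommGroup V] [Module ℂ V]
    (F : ℝ → Submodule ℂ V) (j : ℕ) : ℝ :=
  sSup {t : ℝ | j ≤ Module.finrank ℂ (F t)}

/-- The ray of norms associated with a norm `N` and a filtration `F`. -/
noncomputable def rayNorm {V : Type*} [AddCommGroup V] [Module ℂ V]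
    (N : V → ℝ) (F : ℝ → Submodule ℂ V) (t : ℝ) (f : V) : ℝ :=
  sInf {c : ℝ | ∃ (n : ℕ) (g : Fin n → V) (μ : Fin n → ℝ),
    (∀ i, g i ∈ F (μ i)) ∧ f = ∑ i, g i ∧
    c = ∑ i, Real.exp (-(t * μ i)) * N (g i)}

/-- The `j`-th element of the logarithmic relative spectrum of `N₁` with respect to `N₂`. -/
noncomputable def relSpec {V : Type*} [AddCommGroup V] [Module ℂ V]
    (N₁ N₂ : V → ℝ) (j : ℕ) : ℝ :=
  sSup {x : ℝ | ∃ W : Submodule ℂ V, Module.finrank ℂ W = j ∧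
    x = sInf {y : ℝ | ∃ w : V, w ∈ W ∧ w ≠ 0 ∧ y = Real.log (N₂ w / N₁ w)}}



section AuxHerm

variable {V : Type*} [AddCommGroup V] [Module ℂ V]

/-- The additive monoid hom `x ↦ p x w` for a form additive in the first slot. -/
private def pHom (p : V → V → ℂ)
    (hadd : ∀ u v w, p (u + v) w = p u w + p v w) (w : V) : V →+ ℂ :=
  AddMonoidHom.mk' (fun x => p x w) (fun a b => hadd a b w)

private lemma pHom_apply (p : V → V → ℂ)
    (hadd : ∀ u v w, p (u + v) w = p u w + p v w) (w x : V) :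
    pHom p hadd w x = p x w := rfl

private lemma herm_nonneg (p : V → V → ℂ)
    (hadd : ∀ u v w, p (u + v) w = p u w + p v w)
    (hpos : ∀ v, v ≠ 0 → 0 < (p v v).re) (x : V) : 0 ≤ (p x x).re := by
  by_cases hx : x = 0
  · subst hx
    rw [← pHom_apply p hadd 0 0, map_zero]
    simp
  · exact (hpos x hx).le

private lemma herm_zero_right (p : V → V → ℂ)
    (hadd : ∀ u v w, p (u + v) w = p u w + p v w)
    (hconj : ∀ u v, p v u = (starRingEnd ℂ) (p u v)) (u : V) :
    p u 0 = 0 := by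
  rw [hconj, ← pHom_apply p hadd u 0, map_zero, map_zero]

private lemma herm_real (p : V → V → ℂ)
    (hconj : ∀ u v, p v u = (starRingEnd ℂ) (p u v)) (u : V) :
    p u u = ((p u u).re : ℂ) :=
  (Complex.conj_eq_iff_re.mp (hconj u u).symm).symm

private lemma herm_cs (p : V → V → ℂ)
    (hadd : ∀ u v w, p (u + v) w = p u w + p v w)
    (hsmul : ∀ (c : ℂ) (u v : V), p (c • u) v = c * p u v)
    (hconj : ∀ u v, p v u = (starRingEnd ℂ) (p u v))
    (hpos : ∀ v, v ≠ 0 → 0 < (p v v).re) (u v : V) :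
    ‖p u v‖ ≤ Real.sqrt (p u u).re * Real.sqrt (p v v).re := by
  by_cases hv : v = 0
  · subst hv
    rw [herm_zero_right p hadd hconj u]
    simpa using mul_nonneg (Real.sqrt_nonneg _) (Real.sqrt_nonneg _)
  · set A : ℝ := (p u u).re with hA
    set B : ℝ := (p v v).re with hB
    have hBpos : 0 < B := hpos v hv
    have hAnn : 0 ≤ A := herm_nonneg p hadd hpos u
    set c : ℂ := p u v with hc
    set z : V := (B : ℂ) • u - c • v with hz
    have hpvv : p v v = (B : ℂ) := herm_real p hconj v
    have hpuu : p u u = (A : ℂ) := herm_real p hconj u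
    have e1 : ∀ w, p z w = (B:ℂ) * p u w - c * p v w := by
      intro w
      have h2 : p z w = pHom p hadd w ((B:ℂ) • u) - pHom p hadd w (c • v) := by
        rw [← map_sub, ← hz, pHom_apply]
      rw [h2, pHom_apply, pHom_apply, hsmul, hsmul]
    have hzv : p z v = 0 := by rw [e1, hpvv, hc]; ring
    have hvz : p v z = 0 := by rw [hconj, hzv, map_zero]
    have hpvu : p v u = (starRingEnd ℂ) c := hconj u v
    have hzu : p z u = (B:ℂ)*(A:ℂ) - ((Complex.normSq c : ℝ) : ℂ) := by
      rw [e1, hpuu, hpvu]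
      rw [Complex.mul_conj]
    have huz : p u z = (B:ℂ)*(A:ℂ) - ((Complex.normSq c : ℝ) : ℂ) := by
      rw [hconj, hzu]
      simp [map_sub, map_mul, Complex.conj_ofReal]
    have hzz : p z z = (((B*(B*A - Complex.normSq c)) : ℝ) : ℂ) := by
      rw [e1, hvz, mul_zero, sub_zero, huz]
      push_cast
      ring
    have h0 : 0 ≤ (p z z).re := herm_nonneg p hadd hpos z
    rw [hzz, Complex.ofReal_re] at h0
    have hns : Complex.normSq c ≤ A * B := by nlinarith
    calc ‖c‖ = Real.sqrt (Complex.normSq c) := Complex.norm_def c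
      _ ≤ Real.sqrt (A * B) := Real.sqrt_le_sqrt hns
      _ = Real.sqrt A * Real.sqrt B := Real.sqrt_mul hAnn B

/-- The orthogonal set of a submodule w.r.t. the form `p`, as a submodule. -/
private def pPerp (p : V → V → ℂ)
    (hadd : ∀ u v w, p (u + v) w = p u w + p v w)
    (hsmul : ∀ (c : ℂ) (u v : V), p (c • u) v = c * p u v)
    (K : Submodule ℂ V) : Submodule ℂ V where
  carrier := {v | ∀ u ∈ K, p v u = 0}
  add_mem' := by
    intro x y hx hy u hu
    rw [hadd, hx u hu, hy u hu, add_zero]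
  zero_mem' := by
    intro u hu
    rw [← pHom_apply p hadd u 0, map_zero]
  smul_mem' := by
    intro a x hx u hu
    rw [hsmul, hx u hu, mul_zero]

private lemma pPerp_mem (p : V → V → ℂ) (hadd hsmul) (K : Submodule ℂ V) (v : V) :
    v ∈ pPerp p hadd hsmul K ↔ ∀ u ∈ K, p v u = 0 := Iff.rfl

private lemma pPerp_finrank [FiniteDimensional ℂ V] (p : V → V → ℂ)
    (hadd : ∀ u v w, p (u + v) w = p u w + p v w)
    (hsmul : ∀ (c : ℂ) (u v : V), p (c • u) v = c * p u v)
    (hconj : ∀ u v, p v u = (starRingEnd ℂ) (p u v))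
    (K : Submodule ℂ V) :
    Module.finrank ℂ V ≤
      Module.finrank ℂ K + Module.finrank ℂ (pPerp p hadd hsmul K) := by
  classical
  set k := Module.finrank ℂ K with hk
  let b : Module.Basis (Fin k) ℂ K := Module.finBasis ℂ K
  let L : V →ₗ[ℂ] (Fin k → ℂ) :=
    { toFun := fun v j => p v (b j)
      map_add' := by intro x y; funext j; exact hadd x y (b j)
      map_smul' := by intro a x; funext j; simpa using hsmul a x (b j) }
  have hker : LinearMap.ker L = pPerp p hadd hsmul K := by
    ext v
    simp only [LinearMap.mem_ker, pPerp_mem]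
    constructor
    · intro h u hu
      have hrepr : ((⟨u, hu⟩ : K) : V) = ∑ j, b.repr ⟨u, hu⟩ j • (b j : V) := by
        conv_lhs => rw [← b.sum_repr ⟨u, hu⟩]
        rw [Submodule.coe_sum]; rfl
      have hpv : ∀ j : Fin k, p v ((b j : V)) = 0 := by
        intro j
        have := congrFun h j
        exact this
      have hpu : p u v = 0 := by
        have : p u v = pHom p hadd v u := rfl
        rw [this, show u = ((⟨u, hu⟩ : K) : V) from rfl, hrepr, map_sum]
        apply Finset.sum_eq_zero
        intro j _
        rw [pHom_apply, hsmul]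
        rw [hconj, hpv j, map_zero, mul_zero]
      rw [hconj, hpu, map_zero]
    · intro h
      funext j
      exact h (b j) (b j).2
  have hrk := LinearMap.finrank_range_add_finrank_ker L
  have hrange : Module.finrank ℂ (LinearMap.range L) ≤ k := by
    have := Submodule.finrank_le (LinearMap.range L)
    simpa [Module.finrank_fintype_fun_eq_card] using this
  rw [hker] at hrk
  omega

end AuxHerm

/-- For a Hermitian norm `N` and a filtration `F` on an `r`-dimensional complex vector
space, the logarithmic relative spectrum of the ray of norms with respect to its
initial point is given exactly by the jumping numbers:
`λ_i(N^t_{V,F}, N_V) = t·e_F(i)` for all `t ≥ 0` and `i = 1,…,r`. -/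
theorem relSpec_rayNorm_hermitian
    {V : Type*} [AddCommGroup V] [Module ℂ V] [FiniteDimensional ℂ V]
    (N : V → ℝ) (hN : IsHermitianNorm N) (F : ℝ → Submodule ℂ V) (hF : IsSubspaceFiltration F)
    (t : ℝ) (ht : 0 ≤ t)
    (i : ℕ) (hi1 : 1 ≤ i) (hi2 : i ≤ Module.finrank ℂ V) :
    relSpec (rayNorm N F t) N i = t * jumpNum F i := by
  classical
  obtain ⟨p, hadd, hsmul, hconj, hpos, hNval⟩ := hN
  obtain ⟨hmono, hleft, ⟨t₀, ht₀⟩, ⟨t₁, ht₁⟩⟩ := hF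
  set r := Module.finrank ℂ V with hr
  -- basic norm facts
  have hNnn : ∀ v, 0 ≤ N v := fun v => by rw [hNval]; exact Real.sqrt_nonneg _
  have hNpos : ∀ v, v ≠ 0 → 0 < N v := fun v hv => by
    rw [hNval]; exact Real.sqrt_pos.mpr (hpos v hv)
  have hNsq : ∀ v, N v ^ 2 = (p v v).re := fun v => by
    rw [hNval]; exact Real.sq_sqrt (herm_nonneg p hadd hpos v)
  have hCS : ∀ u v, (p u v).re ≤ N u * N v := fun u v => by
    rw [hNval, hNval]
    exact (Complex.re_le_norm _).trans (herm_cs p hadd hsmul hconj hpos u v)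
  have hFle : ∀ {s u : ℝ}, s ≤ u → F u ≤ F s := by
    intro s u hsu
    rcases eq_or_lt_of_le hsu with h | h
    · exact le_of_eq (by rw [h])
    · exact hmono h
  -- rayNorm upper bound via one-term decompositions
  have hmemS : ∀ (f : V) (μ0 : ℝ), f ∈ F μ0 →
      rayNorm N F t f ≤ Real.exp (-(t * μ0)) * N f := by
    intro f μ0 hf
    apply csInf_le
    · refine ⟨0, ?_⟩
      rintro c ⟨n, g, μ, hg, hsum, rfl⟩
      exact Finset.sum_nonneg fun k _ => mul_nonneg (Real.exp_nonneg _) (hNnn _)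
    · exact ⟨1, fun _ => f, fun _ => μ0, fun _ => hf, by simp, by simp⟩
  -- rayNorm lower bound via pairing against a perp vector
  have hlow : ∀ (s : ℝ) (w : V), (∀ u ∈ F s, p w u = 0) →
      Real.exp (-(t * s)) * N w ≤ rayNorm N F t w := by
    intro s w hw
    apply le_csInf
    · refine ⟨Real.exp (-(t * t₀)) * N w, 1, fun _ => w, fun _ => t₀, ?_, by simp, by simp⟩
      intro k
      rw [ht₀ t₀ le_rfl]
      trivial
    rintro c ⟨n, g, μ, hg, hsum, rfl⟩
    by_cases hw0 : w = 0
    · have hp00 : p (0 : V) (0 : V) = 0 := by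
        rw [← pHom_apply p hadd 0 0, map_zero]
      have hN0 : N (0 : V) = 0 := by rw [hNval, hp00]; simp
      rw [hw0, hN0, mul_zero]
      exact Finset.sum_nonneg fun k _ => mul_nonneg (Real.exp_nonneg _) (hNnn _)
    have key : ∀ k, (p (g k) w).re ≤
        Real.exp (t * s) * (Real.exp (-(t * μ k)) * N (g k)) * N w := by
      intro k
      by_cases hk : s ≤ μ k
      · have hg' : g k ∈ F s := hFle hk (hg k)
        have h0 : p (g k) w = 0 := by rw [hconj, hw (g k) hg', map_zero]
        rw [h0]
        simp only [Complex.zero_re]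
        have := hNnn (g k); have := hNnn w
        positivity
      · push_neg at hk
        have h1 : (p (g k) w).re ≤ N (g k) * N w := hCS _ _
        have h2 : (1 : ℝ) ≤ Real.exp (t * s) * Real.exp (-(t * μ k)) := by
          rw [← Real.exp_add]
          apply Real.one_le_exp
          nlinarith
        nlinarith [hNnn (g k), hNnn w, mul_nonneg (hNnn (g k)) (hNnn w)]
    have hsum2 : (p w w).re = ∑ k, (p (g k) w).re := by
      have hw2 : p w w = ∑ k, p (g k) w := by
        calc p w w = pHom p hadd w w := rfl
          _ = pHom p hadd w (∑ k, g k) := by rw [← hsum]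
          _ = ∑ k, pHom p hadd w (g k) := map_sum _ _ _
          _ = ∑ k, p (g k) w := rfl
      rw [hw2, Complex.re_sum]
    have hfinal : N w ^ 2 ≤
        Real.exp (t * s) * (∑ k, Real.exp (-(t * μ k)) * N (g k)) * N w := by
      rw [hNsq, hsum2]
      calc ∑ k, (p (g k) w).re
          ≤ ∑ k, Real.exp (t * s) * (Real.exp (-(t * μ k)) * N (g k)) * N w :=
            Finset.sum_le_sum fun k _ => key k
        _ = Real.exp (t * s) * (∑ k, Real.exp (-(t * μ k)) * N (g k)) * N w := by
            rw [Finset.mul_sum, Finset.sum_mul]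
    have hNw := hNpos w hw0
    have hexp := Real.exp_pos (t * s)
    have h3 : N w ≤ Real.exp (t * s) * ∑ k, Real.exp (-(t * μ k)) * N (g k) := by
      have h4 : N w * N w ≤
          (Real.exp (t * s) * ∑ k, Real.exp (-(t * μ k)) * N (g k)) * N w := by
        nlinarith [hfinal]
      exact le_of_mul_le_mul_right h4 hNw
    rw [Real.exp_neg, inv_mul_le_iff₀ hexp]
    exact h3
  -- positivity of the ray norm
  have hperpbot : ∀ w : V, ∀ u ∈ F t₁, p w u = 0 := by
    intro w u hu
    rw [ht₁ t₁ le_rfl, Submodule.mem_bot] at hu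
    rw [hu, herm_zero_right p hadd hconj w]
  have hRpos : ∀ w, w ≠ 0 → 0 < rayNorm N F t w := by
    intro w hw0
    have h := hlow t₁ w (hperpbot w)
    have : 0 < Real.exp (-(t * t₁)) * N w := mul_pos (Real.exp_pos _) (hNpos w hw0)
    linarith
  -- uniform log bounds
  have hyub : ∀ w, w ≠ 0 → Real.log (N w / rayNorm N F t w) ≤ t * t₁ := by
    intro w hw0
    rw [Real.log_le_iff_le_exp (div_pos (hNpos w hw0) (hRpos w hw0)),
      div_le_iff₀ (hRpos w hw0)]
    have h := hlow t₁ w (hperpbot w)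
    calc N w = Real.exp (t * t₁) * (Real.exp (-(t * t₁)) * N w) := by
          rw [← mul_assoc, ← Real.exp_add]; simp
      _ ≤ Real.exp (t * t₁) * rayNorm N F t w :=
          mul_le_mul_of_nonneg_left h (Real.exp_nonneg _)
  have hylb : ∀ w, w ≠ 0 → t * t₀ ≤ Real.log (N w / rayNorm N F t w) := by
    intro w hw0
    rw [Real.le_log_iff_exp_le (div_pos (hNpos w hw0) (hRpos w hw0)),
      le_div_iff₀ (hRpos w hw0)]
    have h := hmemS w t₀ (by rw [ht₀ t₀ le_rfl]; trivial)
    calc Real.exp (t * t₀) * rayNorm N F t w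
        ≤ Real.exp (t * t₀) * (Real.exp (-(t * t₀)) * N w) :=
          mul_le_mul_of_nonneg_left h (Real.exp_nonneg _)
      _ = N w := by rw [← mul_assoc, ← Real.exp_add]; simp
  -- jumping number facts
  set e := jumpNum F i with he
  have heq : e = sSup {u : ℝ | i ≤ Module.finrank ℂ (F u)} := rfl
  have hSne : i ≤ Module.finrank ℂ (F t₀) := by
    rw [ht₀ t₀ le_rfl, finrank_top]; exact hi2
  have hSbddA : BddAbove {u : ℝ | i ≤ Module.finrank ℂ (F u)} := by
    refine ⟨t₁, fun u hu => ?_⟩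
    by_contra hcon
    push_neg at hcon
    rw [Set.mem_setOf_eq, ht₁ u hcon.le, finrank_bot] at hu
    omega
  have he_lt : ∀ s, e < s → Module.finrank ℂ (F s) < i := by
    intro s hs
    by_contra hcon
    push_neg at hcon
    have : s ≤ e := le_csSup hSbddA hcon
    linarith
  have he_ge : i ≤ Module.finrank ℂ (F e) := by
    obtain ⟨ε₀, hε₀, hlc⟩ := hleft e
    obtain ⟨u, huS, hu⟩ := exists_lt_of_lt_csSup ⟨t₀, hSne⟩
      (show e - ε₀ < e by rw [heq] at *; linarith)
    have hule : u ≤ e := le_csSup hSbddA huS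
    rcases eq_or_lt_of_le hule with h | h
    · rwa [← h]
    · have heq2 : F (e - (e - u)) = F e := hlc (e - u) (by linarith) (by linarith)
      rw [show e - (e - u) = u by ring] at heq2
      rw [← heq2]
      exact huS
  -- a subspace of dimension i inside F e
  obtain ⟨W₀, hW₀r, hW₀le⟩ :
      ∃ W : Submodule ℂ V, Module.finrank ℂ W = i ∧ W ≤ F e := by
    have hle : i ≤ Module.finrank ℂ (F e) := he_ge
    set b := Module.finBasis ℂ (F e) with hb
    set v : Fin i → V := ((F e).subtype ∘ b ∘ Fin.castLE hle) with hv
    have hli : LinearIndependent ℂ v :=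
      ((b.linearIndependent.comp _ (Fin.castLE_injective hle)).map'
        (F e).subtype (Submodule.ker_subtype _))
    refine ⟨Submodule.span ℂ (Set.range v), ?_, ?_⟩
    · rw [finrank_span_eq_card hli, Fintype.card_fin]
    · rw [Submodule.span_le]
      rintro x ⟨j, rfl⟩
      exact (b (Fin.castLE hle j)).2
  -- spectrum set facts
  have hYne : ∀ W : Submodule ℂ V, Module.finrank ℂ W = i →
      Set.Nonempty {y : ℝ | ∃ w : V, w ∈ W ∧ w ≠ 0 ∧
        y = Real.log (N w / rayNorm N F t w)} := by
    intro W hW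
    have hWb : W ≠ ⊥ := by
      intro h; rw [h, finrank_bot] at hW; omega
    obtain ⟨w, hwW, hw0⟩ := Submodule.exists_mem_ne_zero_of_ne_bot hWb
    exact ⟨_, w, hwW, hw0, rfl⟩
  have hYbdd : ∀ W : Submodule ℂ V, BddBelow {y : ℝ | ∃ w : V, w ∈ W ∧ w ≠ 0 ∧
      y = Real.log (N w / rayNorm N F t w)} := by
    intro W
    refine ⟨t * t₀, ?_⟩
    rintro y ⟨w, hwW, hw0, rfl⟩
    exact hylb w hw0
  have hXne : Set.Nonempty {x : ℝ | ∃ W : Submodule ℂ V, Module.finrank ℂ W = i ∧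
      x = sInf {y : ℝ | ∃ w : V, w ∈ W ∧ w ≠ 0 ∧
        y = Real.log (N w / rayNorm N F t w)}} := ⟨_, W₀, hW₀r, rfl⟩
  have hXbdd : BddAbove {x : ℝ | ∃ W : Submodule ℂ V, Module.finrank ℂ W = i ∧
      x = sInf {y : ℝ | ∃ w : V, w ∈ W ∧ w ≠ 0 ∧
        y = Real.log (N w / rayNorm N F t w)}} := by
    refine ⟨t * t₁, ?_⟩
    rintro x ⟨W, hWr, rfl⟩
    obtain ⟨y, w, hwW, hw0, hy⟩ := hYne W hWr
    exact (csInf_le (hYbdd W) ⟨w, hwW, hw0, hy⟩).trans (hy ▸ hyub w hw0)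
  have hrelSpec : relSpec (rayNorm N F t) N i =
      sSup {x : ℝ | ∃ W : Submodule ℂ V, Module.finrank ℂ W = i ∧
      x = sInf {y : ℝ | ∃ w : V, w ∈ W ∧ w ≠ 0 ∧
        y = Real.log (N w / rayNorm N F t w)}} := rfl
  -- upper bound
  have hub : ∀ s, e < s → relSpec (rayNorm N F t) N i ≤ t * s := by
    intro s hs
    rw [hrelSpec]
    apply csSup_le hXne
    rintro x ⟨W, hWr, rfl⟩
    set P := pPerp p hadd hsmul (F s) with hP
    have hdim1 : r ≤ Module.finrank ℂ (F s) + Module.finrank ℂ P :=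
      pPerp_finrank p hadd hsmul hconj (F s)
    have hdim2 := Submodule.finrank_sup_add_finrank_inf_eq W P
    have hdim3 : Module.finrank ℂ (W ⊔ P : Submodule ℂ V) ≤ r := Submodule.finrank_le _
    have hFs := he_lt s hs
    have hne0 : Module.finrank ℂ (W ⊓ P : Submodule ℂ V) ≠ 0 := by omega
    have hnebot : (W ⊓ P : Submodule ℂ V) ≠ ⊥ := by
      intro h; rw [h, finrank_bot] at hne0; exact hne0 rfl
    obtain ⟨w, hwWP, hw0⟩ := Submodule.exists_mem_ne_zero_of_ne_bot hnebot
    obtain ⟨hwW, hwP⟩ := Submodule.mem_inf.mp hwWP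
    have hRw : Real.exp (-(t * s)) * N w ≤ rayNorm N F t w := hlow s w hwP
    have hyw : Real.log (N w / rayNorm N F t w) ≤ t * s := by
      rw [Real.log_le_iff_le_exp (div_pos (hNpos w hw0) (hRpos w hw0)),
        div_le_iff₀ (hRpos w hw0)]
      calc N w = Real.exp (t * s) * (Real.exp (-(t * s)) * N w) := by
            rw [← mul_assoc, ← Real.exp_add]; simp
        _ ≤ Real.exp (t * s) * rayNorm N F t w :=
            mul_le_mul_of_nonneg_left hRw (Real.exp_nonneg _)
    exact (csInf_le (hYbdd W) ⟨w, hwW, hw0, rfl⟩).trans hyw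
  have hupper : relSpec (rayNorm N F t) N i ≤ t * e := by
    rcases eq_or_lt_of_le ht with h0 | h0
    · have h1 := hub (e + 1) (by linarith)
      rw [← h0] at h1 ⊢
      simpa using h1
    · apply le_of_forall_pos_le_add
      intro ε hε
      have h1 := hub (e + ε / t) (by
        have : 0 < ε / t := div_pos hε h0
        linarith)
      calc relSpec (rayNorm N F t) N i ≤ t * (e + ε / t) := h1
        _ = t * e + ε := by field_simp
  -- lower bound
  have hlb : t * e ≤ sInf {y : ℝ | ∃ w : V, w ∈ W₀ ∧ w ≠ 0 ∧
      y = Real.log (N w / rayNorm N F t w)} := by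
    apply le_csInf (hYne W₀ hW₀r)
    rintro y ⟨w, hwW, hw0, rfl⟩
    have hwFe : w ∈ F e := hW₀le hwW
    have hRle : rayNorm N F t w ≤ Real.exp (-(t * e)) * N w := hmemS w e hwFe
    rw [Real.le_log_iff_exp_le (div_pos (hNpos w hw0) (hRpos w hw0)),
      le_div_iff₀ (hRpos w hw0)]
    calc Real.exp (t * e) * rayNorm N F t w
        ≤ Real.exp (t * e) * (Real.exp (-(t * e)) * N w) :=
          mul_le_mul_of_nonneg_left hRle (Real.exp_nonneg _)
      _ = N w := by rw [← mul_assoc, ← Real.exp_add]; simp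
  have hlower : t * e ≤ relSpec (rayNorm N F t) N i := by
    rw [hrelSpec]
    exact hlb.trans (le_csSup hXbdd ⟨W₀, hW₀r, rfl⟩)
  exact le_antisymm hupper hlower
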